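/- arXiv:1007.2080 — 3 statements merged into one kernel-verified Lean document; each statement's English description precedes it below -/
import Mathlib

section
/- Let G be a group and let g₁, …, gₙ ∈ G have the following property: for each j with 1 ≤ j ≤ n there exist positive integers K_{j,1}, …, K_{j,n} such that for every positive integer m there exists a finite group H_{j,m} and a group homomorphism φ_{j,m} : G → H_{j,m} with the order of φ_{j,m}(g_k) equal to K_{j,k} for all k ≠ j and the order of φ_{j,m}(g_j) equal to m·K_{j,j}. Then there exists a positive integer K such that for every sequence of positive integers l₁, …, lₙ there exists a finite group H and a surjective group homomorphism ψ : G → H with the order of ψ(gᵢ) equal to K·lᵢ for every i. -/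
/-- Lemma 2 of the paper, due to Wise. Let `G` be a group and
`g₁, …, gₙ ∈ G` be such that for each `j` there are positive constants `K_{j,1}, …, K_{j,n}`
such that for every positive `m` there is a homomorphism `φ_{j,m}` of `G` to a finite group
with `orderOf (φ_{j,m} g_k) = K_{j,k}` for `k ≠ j` and `orderOf (φ_{j,m} g_j) = m * K_{j,j}`.
Then there is `K > 0` such that for every sequence of positive integers `l₁, …, lₙ` there is
a surjection `ψ` of `G` onto a finite group with `orderOf (ψ gᵢ) = K * lᵢ` for all `i`. -/
theorem omnipotence_of_independent_order_control
    {G : Type*} [Group G] (n : ℕ) (g : Fin n → G)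
    (h : ∀ j : Fin n, ∃ K : Fin n → ℕ, (∀ k, 0 < K k) ∧
      ∀ m : ℕ, 0 < m →
        ∃ (H : Type) (_ : Group H) (_ : Finite H) (φ : G →* H),
          (∀ k, k ≠ j → orderOf (φ (g k)) = K k) ∧
          orderOf (φ (g j)) = m * K j) :
    ∃ K : ℕ, 0 < K ∧ ∀ l : Fin n → ℕ, (∀ i, 0 < l i) →
      ∃ (H : Type) (_ : Group H) (_ : Finite H) (ψ : G →* H),
        Function.Surjective ψ ∧ ∀ i, orderOf (ψ (g i)) = K * l i := by
  choose K hKpos hφ using h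
  -- C = product of all the constants
  set C : ℕ := ∏ p : Fin n × Fin n, K p.1 p.2 with hC
  have hCdvd : ∀ j k, K j k ∣ C := fun j k =>
    Finset.dvd_prod_of_mem (fun p : Fin n × Fin n => K p.1 p.2) (Finset.mem_univ (j, k))
  have hCpos : 0 < C := Finset.prod_pos fun p _ => hKpos p.1 p.2
  refine ⟨C, hCpos, fun l hl => ?_⟩
  -- choose the multipliers
  set m : Fin n → ℕ := fun j => (C / K j j) * l j with hm
  have hmpos : ∀ j, 0 < m j := fun j =>
    Nat.mul_pos (Nat.div_pos (Nat.le_of_dvd hCpos (hCdvd j j)) (hKpos j j)) (hl j)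
  have hmK : ∀ j, m j * K j j = C * l j := by
    intro j
    rw [hm]
    rw [mul_right_comm, Nat.div_mul_cancel (hCdvd j j)]
  choose H hG hF φ hord1 hord2 using fun j => hφ j (m j) (hmpos j)
  letI : ∀ j, Group (H j) := hG
  letI : ∀ j, Finite (H j) := hF
  -- the product homomorphism
  set ψ0 : G →* ∀ j, H j := MonoidHom.pi φ with hψ0
  have hord : ∀ i, orderOf (ψ0 (g i)) = C * l i := by
    intro i
    apply Nat.dvd_antisymm
    · apply orderOf_dvd_of_pow_eq_one
      funext j
      simp only [hψ0, MonoidHom.pi_apply, Pi.pow_apply, Pi.one_apply] at *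
      by_cases hji : j = i
      · subst hji
        rw [← orderOf_dvd_iff_pow_eq_one, hord2 j, hmK j]
      · rw [← orderOf_dvd_iff_pow_eq_one, hord1 j i (Ne.symm hji)]
        exact (hCdvd j i).trans (Dvd.intro (l i) rfl)
    · have := orderOf_map_dvd (Pi.evalMonoidHom H i) (ψ0 (g i))
      simp only [Pi.evalMonoidHom_apply, hψ0, MonoidHom.pi_apply] at this
      rw [hord2 i, hmK i] at this
      exact this
  refine ⟨ψ0.range, inferInstance, ?_, ψ0.rangeRestrict,
    ψ0.rangeRestrict_surjective, fun i => ?_⟩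
  · exact Subtype.finite
  · rw [← hord i]
    exact (orderOf_injective ψ0.range.subtype ψ0.range.subtype_injective
      (ψ0.rangeRestrict (g i))).symm
end

section
/- Let G = A ∗ B be the free product of two residually finite groups A and B, and let u ∈ G be an element that does not lie in any conjugate of A or of B. Then there exists a positive integer K such that for every positive integer l there exists a finite group H and a surjective group homomorphism φ : G → H such that the order of φ(u) equals K·l. -/
open scoped Monoid.Coprod


namespace FPOrder

/-! ### Nat helpers -/

theorem nat_lcm_mul_right' (a b l : ℕ) :
    Nat.lcm (a * l) (b * l) = Nat.lcm a b * l := by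
  show lcm (a * l) (b * l) = lcm a b * l
  rw [lcm_mul_right, normalize_eq]

theorem dvd_mul_iff_div_gcd_dvd {m s t : ℕ} (hm : 0 < m) :
    m ∣ t * s ↔ (m / Nat.gcd m s) ∣ t := by
  rcases Nat.eq_zero_or_pos s with hs | hs
  · subst hs
    simp [Nat.gcd_zero_right, Nat.div_self hm]
  · set g := Nat.gcd m s with hg
    have hgpos : 0 < g := Nat.gcd_pos_of_pos_left s hm
    have hgm : g ∣ m := Nat.gcd_dvd_left _ _
    have hgs : g ∣ s := Nat.gcd_dvd_right _ _
    have hco : Nat.Coprime (m / g) (s / g) := Nat.coprime_div_gcd_div_gcd hgpos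
    constructor
    · intro h
      have h2 : (m / g) * g ∣ t * ((s / g) * g) := by
        rwa [Nat.div_mul_cancel hgm, Nat.div_mul_cancel hgs]
      rw [← mul_assoc] at h2
      have h3 : (m / g) ∣ t * (s / g) := (Nat.mul_dvd_mul_iff_right hgpos).mp h2
      exact hco.dvd_of_dvd_mul_right h3
    · intro h
      calc m = (m / g) * g := (Nat.div_mul_cancel hgm).symm
      _ ∣ t * g := mul_dvd_mul_right h g
      _ ∣ t * s := mul_dvd_mul_left t hgs



open Monoid Equiv

variable {P Q X : Type*} [Group P] [Group Q]

/-- product of a list of pairs, as alternating word. -/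
def prodL (L : List (P × Q)) : P ∗ Q :=
  (L.map fun p => Coprod.inl p.1 * Coprod.inr p.2).prod

@[simp] theorem prodL_nil : prodL ([] : List (P × Q)) = 1 := rfl

@[simp] theorem prodL_cons (p : P × Q) (L : List (P × Q)) :
    prodL (p :: L) = Coprod.inl p.1 * Coprod.inr p.2 * prodL L := by
  simp [prodL]

/-- the shear permutation `(k, x) ↦ (k + f x, x)`. -/
def shear (f : X → ℤ) (m : ℕ) : Equiv.Perm (ZMod m × X) where
  toFun p := (p.1 + (f p.2 : ZMod m), p.2)
  invFun p := (p.1 - (f p.2 : ZMod m), p.2)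
  left_inv p := by simp
  right_inv p := by simp

@[simp] theorem shear_apply (f : X → ℤ) (m : ℕ) (k : ZMod m) (x : X) :
    shear f m (k, x) = (k + (f x : ZMod m), x) := rfl

@[simp] theorem shear_symm_apply (f : X → ℤ) (m : ℕ) (k : ZMod m) (x : X) :
    (shear f m).symm (k, x) = (k - (f x : ZMod m), x) := rfl

/-- extend a permutation of `X` to `ZMod m × X`, as a monoid hom. -/
def permProdR (m : ℕ) : Equiv.Perm X →* Equiv.Perm (ZMod m × X) where
  toFun σ := Equiv.prodCongr (Equiv.refl (ZMod m)) σ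
  map_one' := by ext p <;> simp
  map_mul' σ τ := by ext p <;> simp

@[simp] theorem permProdR_apply (m : ℕ) (σ : Equiv.Perm X) (k : ZMod m) (x : X) :
    permProdR m σ (k, x) = (k, σ x) := rfl

variable (φ₀ : P ∗ Q →* Equiv.Perm X) (f : X → ℤ) (m : ℕ)

/-- the twisted lift. -/
noncomputable def liftTwist : P ∗ Q →* Equiv.Perm (ZMod m × X) :=
  Coprod.lift ((permProdR m).comp (φ₀.comp Coprod.inl))
    (((MulAut.conj (shear f m)).toMonoidHom).comp ((permProdR m).comp (φ₀.comp Coprod.inr)))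

theorem liftTwist_inl (p : P) (k : ZMod m) (x : X) :
    liftTwist φ₀ f m (Coprod.inl p) (k, x) = (k, φ₀ (Coprod.inl p) x) := by
  simp [liftTwist]

theorem liftTwist_inr (q : Q) (k : ZMod m) (x : X) :
    liftTwist φ₀ f m (Coprod.inr q) (k, x)
      = (k + ((f (φ₀ (Coprod.inr q) x) - f x : ℤ) : ZMod m), φ₀ (Coprod.inr q) x) := by
  simp only [liftTwist, Coprod.lift_apply_inr, MonoidHom.comp_apply, MulEquiv.coe_toMonoidHom,
    MulAut.conj_apply]
  have : ∀ (σ τ ρ : Equiv.Perm (ZMod m × X)) (y : ZMod m × X), (σ * τ * ρ) y = σ (τ (ρ y)) := by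
    intros; rfl
  rw [this]
  rw [show ((shear f m)⁻¹ : Equiv.Perm (ZMod m × X)) (k, x) = (k - (f x : ZMod m), x) from rfl]
  simp only [permProdR_apply, shear_apply]
  push_cast
  ring_nf

/-- the accumulated increment function. -/
def PhiF : List (P × Q) → X → ℤ
  | [], _ => 0
  | (p :: M), x =>
      PhiF M x + f (φ₀ (Coprod.inr p.2) (φ₀ (prodL M) x)) - f (φ₀ (prodL M) x)

theorem liftTwist_prodL (L : List (P × Q)) (k : ZMod m) (x : X) :
    liftTwist φ₀ f m (prodL L) (k, x)
      = (k + ((PhiF φ₀ f L x : ℤ) : ZMod m), φ₀ (prodL L) x) := by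
  induction L generalizing k with
  | nil => simp [PhiF]
  | cons p M ih =>
      rw [prodL_cons, map_mul, map_mul, map_mul, map_mul]
      have : ∀ (σ τ ρ : Equiv.Perm (ZMod m × X)) (y : ZMod m × X), (σ * τ * ρ) y = σ (τ (ρ y)) := by
        intros; rfl
      rw [this, ih, liftTwist_inr, liftTwist_inl]
      have : ∀ (σ τ ρ : Equiv.Perm X) (y : X), (σ * τ * ρ) y = σ (τ (ρ y)) := by
        intros; rfl
      rw [this]
      simp only [PhiF]
      push_cast
      ring_nf


section OrderComp

open Monoid Equiv Finset

variable {P Q X : Type*} [Group P] [Group Q]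

theorem pow_liftTwist (φ₀ : P ∗ Q →* Equiv.Perm X) (f : X → ℤ) (m : ℕ)
    (L : List (P × Q)) (j : ℕ) (k : ZMod m) (x : X) :
    (liftTwist φ₀ f m (prodL L) ^ j) (k, x)
      = (k + ((∑ r ∈ Finset.range j, PhiF φ₀ f L ((φ₀ (prodL L) ^ r) x) : ℤ) : ZMod m),
          (φ₀ (prodL L) ^ j) x) := by
  induction j with
  | zero => simp
  | succ j ih =>
      rw [pow_succ', Equiv.Perm.mul_apply, ih, liftTwist_prodL]
      have h1 : (φ₀ (prodL L)) ((φ₀ (prodL L) ^ j) x) = (φ₀ (prodL L) ^ (j+1)) x := by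
        rw [pow_succ', Equiv.Perm.mul_apply]
      rw [h1, Finset.sum_range_succ]
      push_cast
      rw [add_assoc]

end OrderComp
section OrderMain

open Monoid Equiv Finset

variable {P Q X : Type*} [Group P] [Group Q] [Fintype X]

theorem lcm_scale {α : Type*} [DecidableEq α] (s : Finset α) (hs : s.Nonempty)
    (g : α → ℕ) (l : ℕ) : s.lcm (fun x => g x * l) = s.lcm g * l := by
  induction hs using Finset.Nonempty.cons_induction with
  | singleton a => simp [Finset.lcm_singleton, Nat.lcm]
  | cons a s ha hs ih =>
      rw [Finset.cons_eq_insert, Finset.lcm_insert, Finset.lcm_insert, ih]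
      exact nat_lcm_mul_right' _ _ _

theorem order_liftTwist (φ₀ : P ∗ Q →* Equiv.Perm X) (f : X → ℤ)
    (L : List (P × Q)) (x₀ : X) (hx : φ₀ (prodL L) x₀ = x₀)
    (hΦ : 0 < PhiF φ₀ f L x₀) :
    ∃ K : ℕ, 0 < K ∧ ∀ l : ℕ, 0 < l → ∃ m : ℕ, 0 < m ∧
      orderOf (liftTwist φ₀ f m (prodL L)) = K * l := by
  classical
  set π : Equiv.Perm X := φ₀ (prodL L) with hπ
  set Φ : X → ℤ := PhiF φ₀ f L with hΦdef
  -- minimal periods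
  set d : X → ℕ := fun x => Function.minimalPeriod π x with hd
  have hfixiter : ∀ (x : X) (j : ℕ), (π ^ j) x = x ↔ d x ∣ j := by
    intro x j
    rw [hd]
    rw [← Function.isPeriodicPt_iff_minimalPeriod_dvd]
    unfold Function.IsPeriodicPt Function.IsFixedPt
    rw [Equiv.Perm.iterate_eq_pow]
  have hdpos : ∀ x, 0 < d x := by
    intro x
    have h1 : (π ^ orderOf π) x = x := by rw [pow_orderOf_eq_one]; rfl
    have h2 : 0 < orderOf π := orderOf_pos π
    rcases Nat.eq_zero_or_pos (d x) with h | h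
    · exfalso
      have := (hfixiter x (orderOf π)).mp h1
      rw [h] at this
      have := Nat.eq_zero_of_zero_dvd this
      omega
    · exact h
  set S : X → ℤ := fun x => ∑ r ∈ Finset.range (d x), Φ ((π ^ r) x) with hS
  -- block sums
  have hblock : ∀ (x : X) (t : ℕ), ∑ r ∈ Finset.range (t * d x), Φ ((π ^ r) x)
      = (t : ℤ) * S x := by
    intro x t
    induction t with
    | zero => simp
    | succ t ih =>
        have : (t + 1) * d x = t * d x + d x := by ring
        rw [this, Finset.sum_range_add, ih]
        have hper : ∀ r, (π ^ (t * d x + r)) x = (π ^ r) x := by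
          intro r
          have h1 : (π ^ (t * d x)) x = x := (hfixiter x _).mpr ⟨t, by ring⟩
          rw [add_comm, pow_add, Equiv.Perm.mul_apply, h1]
        have : ∑ r ∈ Finset.range (d x), Φ ((π ^ (t * d x + r)) x) = S x := by
          rw [hS]
          exact Finset.sum_congr rfl fun r _ => by rw [hper r]
        rw [this]
        push_cast
        ring
  -- the key equivalence
  have hkey : ∀ (m : ℕ) (_ : 0 < m) (j : ℕ),
      (liftTwist φ₀ f m (prodL L)) ^ j = 1 ↔
        ∀ x, d x ∣ j ∧ (m : ℤ) ∣ ((j / d x : ℕ) : ℤ) * S x := by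
    intro m hm j
    haveI : NeZero m := ⟨hm.ne'⟩
    constructor
    · intro h x
      have h0 := congrArg (fun σ : Equiv.Perm (ZMod m × X) => σ (0, x)) h
      simp only [Equiv.Perm.one_apply] at h0
      rw [pow_liftTwist] at h0
      have h1 : (π ^ j) x = x := (congrArg Prod.snd h0)
      have hdvd : d x ∣ j := (hfixiter x j).mp h1
      refine ⟨hdvd, ?_⟩
      have h2 : ((∑ r ∈ Finset.range j, Φ ((π ^ r) x) : ℤ) : ZMod m) = 0 := by
        have := congrArg Prod.fst h0
        simpa using this
      rw [ZMod.intCast_zmod_eq_zero_iff_dvd] at h2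
      have hj : j = (j / d x) * d x := (Nat.div_mul_cancel hdvd).symm
      rw [hj, hblock] at h2
      exact h2
    · intro h
      ext ⟨k, x⟩
      · rw [pow_liftTwist]
        simp only [Equiv.Perm.one_apply]
        have hdvd := (h x).1
        have hj : j = (j / d x) * d x := (Nat.div_mul_cancel hdvd).symm
        have h2 : ((∑ r ∈ Finset.range j, Φ ((π ^ r) x) : ℤ) : ZMod m) = 0 := by
          rw [hj, hblock, ZMod.intCast_zmod_eq_zero_iff_dvd]
          exact (h x).2
        rw [h2]
        simp
      · rw [pow_liftTwist]
        simp only [Equiv.Perm.one_apply]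
        exact (hfixiter x j).mpr (h x).1
  -- now define the constants
  set dd : ℕ := Finset.univ.lcm d with hdd
  set LL : ℕ := Finset.univ.lcm (fun x => max (S x).natAbs 1) with hLL
  have hddpos : 0 < dd := by
    rcases Nat.eq_zero_or_pos dd with h | h
    · exfalso
      rw [hdd] at h
      rw [Finset.lcm_eq_zero_iff] at h
      obtain ⟨x, _, hx0⟩ := h
      exact (hdpos x).ne' hx0
    · exact h
  have hLLpos : 0 < LL := by
    rcases Nat.eq_zero_or_pos LL with h | h
    · exfalso
      rw [hLL] at h
      rw [Finset.lcm_eq_zero_iff] at h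
      obtain ⟨x, _, hx0⟩ := h
      have h1 : (1:ℕ) ≤ max (S x).natAbs 1 := le_max_right _ _
      omega
    · exact h
  set C : ℕ := dd * LL with hC
  have hCpos : 0 < C := Nat.mul_pos hddpos hLLpos
  have hfix0 : ∀ r : ℕ, (π ^ r) x₀ = x₀ := by
    intro r
    induction r with
    | zero => rfl
    | succ r ih => rw [pow_succ', Equiv.Perm.mul_apply, ih, hx]
  have hSx0 : 0 < S x₀ := by
    have h1 : S x₀ = ∑ r ∈ Finset.range (d x₀), Φ ((π ^ r) x₀) := rfl
    have h2 : ∀ r ∈ Finset.range (d x₀), Φ ((π ^ r) x₀) = Φ x₀ := by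
      intro r _
      rw [hfix0 r]
    rw [h1, Finset.sum_congr rfl h2, Finset.sum_const, Finset.card_range, nsmul_eq_mul]
    exact mul_pos (by exact_mod_cast hdpos x₀) hΦ
  have hSdvdC : ∀ x, S x ≠ 0 → (S x).natAbs ∣ C := by
    intro x hSx
    have h1 : (S x).natAbs ∣ LL := by
      have : max (S x).natAbs 1 = (S x).natAbs := by
        have : 1 ≤ (S x).natAbs := by
          rcases Nat.eq_zero_or_pos (S x).natAbs with h | h
          · exact absurd (Int.natAbs_eq_zero.mp h) hSx
          · exact h
        omega
      rw [hLL, ← this]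
      exact Finset.dvd_lcm (Finset.mem_univ x)
    exact h1.trans (Dvd.intro_left dd rfl)
  have hddvd : ∀ x, d x ∣ dd := fun x => Finset.dvd_lcm (Finset.mem_univ x)
  set g : X → ℕ := fun x => if S x = 0 then 1 else d x * (C / (S x).natAbs) with hg
  set E : ℕ := Finset.univ.lcm g with hE
  have hgpos : ∀ x, 0 < g x := by
    intro x
    rw [hg]
    by_cases hSx : S x = 0
    · simp [hSx]
    · simp only [hSx, if_false]
      refine Nat.mul_pos (hdpos x) (Nat.div_pos (Nat.le_of_dvd hCpos (hSdvdC x hSx)) ?_)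
      rcases Nat.eq_zero_or_pos (S x).natAbs with h | h
      · exact absurd (Int.natAbs_eq_zero.mp h) hSx
      · exact h
  have hEpos : 0 < E := by
    rcases Nat.eq_zero_or_pos E with h | h
    · exfalso
      rw [hE, Finset.lcm_eq_zero_iff] at h
      obtain ⟨x, _, hx0⟩ := h
      exact (hgpos x).ne' hx0
    · exact h
  have hddvdgx0 : dd ∣ g x₀ := by
    rw [hg]
    simp only [hSx0.ne', if_false]
    have h1 : C / (S x₀).natAbs = dd * (LL / (S x₀).natAbs) := by
      rw [hC]
      exact Nat.mul_div_assoc dd (by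
        have h2 := hSdvdC x₀ hSx0.ne'
        have : max (S x₀).natAbs 1 = (S x₀).natAbs := by
          have : 1 ≤ (S x₀).natAbs := by
            rcases Nat.eq_zero_or_pos (S x₀).natAbs with h | h
            · exact absurd (Int.natAbs_eq_zero.mp h) hSx0.ne'
            · exact h
          omega
        rw [hLL, ← this]
        exact Finset.dvd_lcm (Finset.mem_univ x₀))
    rw [h1]
    exact Dvd.dvd.mul_left (Dvd.intro _ rfl) (d x₀)
  have hddvdE : dd ∣ E := hddvdgx0.trans (Finset.dvd_lcm (Finset.mem_univ x₀))
  refine ⟨E, hEpos, ?_⟩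
  intro l hl
  set m : ℕ := C * l with hm
  have hmpos : 0 < m := Nat.mul_pos hCpos hl
  refine ⟨m, hmpos, ?_⟩
  haveI : NeZero m := ⟨hmpos.ne'⟩
  set τ := liftTwist φ₀ f m (prodL L) with hτ
  -- τ ^ (E * l) = 1
  have hpow : τ ^ (E * l) = 1 := by
    rw [hτ, hkey m hmpos]
    intro x
    constructor
    · exact ((hddvd x).trans hddvdE).trans (Dvd.intro l rfl)
    · by_cases hSx : S x = 0
      · rw [hSx]
        simp
      · rw [← Int.natAbs_dvd_natAbs]
        rw [Int.natAbs_mul, Int.natAbs_natCast, Int.natAbs_natCast]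
        obtain ⟨u, hu⟩ := Finset.dvd_lcm (f := g) (Finset.mem_univ x)
        rw [← hE] at hu
        have hgx : g x = d x * (C / (S x).natAbs) := by rw [hg]; simp [hSx]
        have hEl : E * l / d x = (C / (S x).natAbs) * u * l := by
          rw [hu, hgx]
          rw [show d x * (C / (S x).natAbs) * u * l = d x * ((C / (S x).natAbs) * u * l) by ring]
          exact Nat.mul_div_cancel_left _ (hdpos x)
        rw [hEl]
        refine ⟨u, ?_⟩
        have hcc : C / (S x).natAbs * (S x).natAbs = C := Nat.div_mul_cancel (hSdvdC x hSx)
        calc C / (S x).natAbs * u * l * (S x).natAbs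
            = (C / (S x).natAbs * (S x).natAbs) * (u * l) := by ring
          _ = C * (u * l) := by rw [hcc]
          _ = m * u := by rw [hm]; ring
  -- minimality
  have hmin : E * l ∣ orderOf τ := by
    have hvalid := (hkey m hmpos (orderOf τ)).mp (by rw [← hτ]; exact pow_orderOf_eq_one τ)
    set j := orderOf τ with hj
    have hnl : ∀ x, S x ≠ 0 → g x * l ∣ j := by
      intro x hSx
      obtain ⟨hd1, hd2⟩ := hvalid x
      have hd2' : m ∣ (j / d x) * (S x).natAbs := by
        rw [← Int.natAbs_dvd_natAbs, Int.natAbs_mul, Int.natAbs_natCast, Int.natAbs_natCast] at hd2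
        exact hd2
      have h3 : (m / Nat.gcd m (S x).natAbs) ∣ (j / d x) :=
        (dvd_mul_iff_div_gcd_dvd hmpos).mp hd2'
      have hgcd : Nat.gcd m (S x).natAbs = (S x).natAbs := by
        apply Nat.gcd_eq_right
        exact (hSdvdC x hSx).trans (Dvd.intro l rfl)
      rw [hgcd] at h3
      have hms : m / (S x).natAbs = (C / (S x).natAbs) * l := by
        obtain ⟨c', hc'⟩ := hSdvdC x hSx
        have hpos : 0 < (S x).natAbs := by
          rcases Nat.eq_zero_or_pos (S x).natAbs with h | h
          · exact absurd (Int.natAbs_eq_zero.mp h) hSx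
          · exact h
        rw [hm, hc', Nat.mul_div_cancel_left _ hpos,
          show (S x).natAbs * c' * l = (S x).natAbs * (c' * l) by ring,
          Nat.mul_div_cancel_left _ hpos]
      rw [hms] at h3
      have h4 : d x * ((C / (S x).natAbs) * l) ∣ d x * (j / d x) :=
        mul_dvd_mul_left (d x) h3
      rw [Nat.mul_div_cancel' hd1] at h4
      have hgx : g x = d x * (C / (S x).natAbs) := by rw [hg]; simp [hSx]
      rw [hgx, mul_assoc]
      exact h4
    have hall : ∀ x, g x * l ∣ j := by
      intro x
      by_cases hSx : S x = 0
      · have : g x = 1 := by rw [hg]; simp [hSx]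
        rw [this, one_mul]
        exact (Dvd.intro_left (g x₀) rfl).trans (hnl x₀ hSx0.ne')
      · exact hnl x hSx
    have hlcm : Finset.univ.lcm (fun x => g x * l) ∣ j :=
      Finset.lcm_dvd fun x _ => hall x
    rwa [lcm_scale Finset.univ ⟨x₀, Finset.mem_univ x₀⟩ g l, ← hE] at hlcm
  exact Nat.dvd_antisymm (orderOf_dvd_of_pow_eq_one hpow) hmin


end OrderMain
theorem exists_perm_extend {X : Type*} [DecidableEq X] (k : ℕ) (u w : Fin k → X)
    (hu : Function.Injective u) (hw : Function.Injective w) :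
    ∃ ρ : Equiv.Perm X, ∀ i, ρ (u i) = w i := by
  induction k with
  | zero => exact ⟨1, fun i => i.elim0⟩
  | succ k ih =>
      obtain ⟨ρ', hρ'⟩ := ih (u ∘ Fin.castSucc) (w ∘ Fin.castSucc)
        (hu.comp (Fin.castSucc_injective k)) (hw.comp (Fin.castSucc_injective k))
      refine ⟨Equiv.swap (ρ' (u (Fin.last k))) (w (Fin.last k)) * ρ', ?_⟩
      intro i
      induction i using Fin.lastCases with
      | last => rw [Equiv.Perm.mul_apply, Equiv.swap_apply_left]
      | cast j =>
        rw [Equiv.Perm.mul_apply]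
        have h1 : ρ' (u j.castSucc) = w j.castSucc := hρ' j
        rw [h1]
        apply Equiv.swap_apply_of_ne_of_ne
        · intro hc
          have : u j.castSucc = u (Fin.last k) := ρ'.injective (by rw [h1, hc])
          have := hu this
          exact absurd this (Fin.ne_of_lt (Fin.castSucc_lt_last j))
        · intro hc
          have := hw hc
          exact absurd this (Fin.ne_of_lt (Fin.castSucc_lt_last j))

section Core

open Monoid Equiv Finset

/-- plain action of `P` on the middle coordinate. -/
def plainPHom (n : ℕ) (P Q : Type*) [Group P] [Group Q] :
    P →* Equiv.Perm (ZMod n × P × Q) where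
  toFun p := Equiv.prodCongr (Equiv.refl (ZMod n))
    (Equiv.prodCongr (Equiv.mulLeft p) (Equiv.refl Q))
  map_one' := by ext x <;> simp
  map_mul' p p' := by ext x <;> simp [mul_assoc]

/-- plain action of `Q` on the last coordinate. -/
def plainQHom (n : ℕ) (P Q : Type*) [Group P] [Group Q] :
    Q →* Equiv.Perm (ZMod n × P × Q) where
  toFun q := Equiv.prodCongr (Equiv.refl (ZMod n))
    (Equiv.prodCongr (Equiv.refl P) (Equiv.mulLeft q))
  map_one' := by ext x <;> simp
  map_mul' q q' := by ext x <;> simp [mul_assoc]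

@[simp] theorem plainPHom_apply {n : ℕ} {P Q : Type*} [Group P] [Group Q]
    (p : P) (i : ZMod n) (s : P) (t : Q) :
    plainPHom n P Q p (i, s, t) = (i, p * s, t) := rfl

@[simp] theorem plainQHom_apply {n : ℕ} {P Q : Type*} [Group P] [Group Q]
    (q : Q) (i : ZMod n) (s : P) (t : Q) :
    plainQHom n P Q q (i, s, t) = (i, s, q * t) := rfl

theorem core_theorem {P Q : Type} [Group P] [Group Q] [Finite P] [Finite Q]
    (L : List (P × Q)) (hne : L ≠ []) (hL : ∀ p ∈ L, p.1 ≠ 1 ∧ p.2 ≠ 1) :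
    ∃ K : ℕ, 0 < K ∧ ∀ l : ℕ, 0 < l →
      ∃ (H : Type) (_ : Group H) (_ : Finite H) (φ : P ∗ Q →* H),
        orderOf (φ (prodL L)) = K * l := by
  classical
  haveI : Fintype P := Fintype.ofFinite P
  haveI : Fintype Q := Fintype.ofFinite Q
  set n := L.length with hn
  have hnpos : 0 < n := by
    rw [hn]
    exact List.length_pos_iff.mpr hne
  haveI : NeZero n := ⟨hnpos.ne'⟩
  set R := L.reverse with hRdef
  have hR : R.length = n := by simp [hRdef, hn]
  have hlt : ∀ i : Fin n, (i : ℕ) < R.length := fun i => by rw [hR]; exact i.isLt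
  set pr : Fin n → P × Q := fun i => R[(i : ℕ)]'(hlt i) with hprdef
  have hpr : ∀ i, (pr i).1 ≠ 1 ∧ (pr i).2 ≠ 1 := by
    intro i
    apply hL
    have : pr i ∈ R := List.getElem_mem (hlt i)
    rwa [hRdef, List.mem_reverse] at this
  -- cast injectivity
  have castinj : ∀ i j : Fin n, ((i : ℕ) : ZMod n) = ((j : ℕ) : ZMod n) → i = j := by
    intro i j h
    have h2 := congrArg ZMod.val h
    rw [ZMod.val_cast_of_lt i.isLt, ZMod.val_cast_of_lt j.isLt] at h2
    exact Fin.ext h2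
  have castinj2 : ∀ i j : Fin n,
      (((i : ℕ) + 1 : ℕ) : ZMod n) = (((j : ℕ) + 1 : ℕ) : ZMod n) → i = j := by
    intro i j h
    rw [ZMod.natCast_eq_natCast_iff] at h
    have h2 : (i : ℕ) ≡ (j : ℕ) [MOD n] := Nat.ModEq.add_right_cancel' 1 h
    have h3 : (i : ℕ) % n = (j : ℕ) % n := h2
    rw [Nat.mod_eq_of_lt i.isLt, Nat.mod_eq_of_lt j.isLt] at h3
    exact Fin.ext h3
  -- source and target families
  set srcF : Fin n ⊕ Fin n → ZMod n × P × Q :=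
    Sum.elim (fun i => (((i : ℕ) : ZMod n), 1, (pr i).2))
      (fun i => ((((i : ℕ) + 1 : ℕ) : ZMod n), 1, 1)) with hsrcdef
  set tgtF : Fin n ⊕ Fin n → ZMod n × P × Q :=
    Sum.elim (fun i => (((i : ℕ) : ZMod n), 1, 1))
      (fun i => (((i : ℕ) : ZMod n), (pr i).1, 1)) with htgtdef
  have hsrcinj : Function.Injective srcF := by
    intro x y h
    rcases x with i | i <;> rcases y with j | j <;>
      simp only [hsrcdef, Sum.elim_inl, Sum.elim_inr, Prod.mk.injEq] at h
    · exact congrArg Sum.inl (castinj i j h.1)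
    · exact absurd h.2.2 (hpr i).2
    · exact absurd h.2.2.symm (hpr j).2
    · exact congrArg Sum.inr (castinj2 i j h.1)
  have htgtinj : Function.Injective tgtF := by
    intro x y h
    rcases x with i | i <;> rcases y with j | j <;>
      simp only [htgtdef, Sum.elim_inl, Sum.elim_inr, Prod.mk.injEq] at h
    · exact congrArg Sum.inl (castinj i j h.1)
    · exact absurd h.2.1.symm (hpr j).1
    · exact absurd h.2.1 (hpr i).1
    · exact congrArg Sum.inr (castinj i j h.1)
  obtain ⟨ρ, hρ0⟩ := exists_perm_extend (n + n)
    (srcF ∘ finSumFinEquiv.symm) (tgtF ∘ finSumFinEquiv.symm)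
    (hsrcinj.comp finSumFinEquiv.symm.injective)
    (htgtinj.comp finSumFinEquiv.symm.injective)
  have hρ : ∀ j, ρ (srcF j) = tgtF j := by
    intro j
    have := hρ0 (finSumFinEquiv j)
    simpa using this
  -- the base homomorphism
  set A₀ : P →* Equiv.Perm (ZMod n × P × Q) :=
    ((MulAut.conj ρ⁻¹).toMonoidHom).comp (plainPHom n P Q) with hA₀
  set φ₀ : P ∗ Q →* Equiv.Perm (ZMod n × P × Q) :=
    Coprod.lift A₀ (plainQHom n P Q) with hφ₀
  set x₀ : ZMod n × P × Q := ((0 : ZMod n), 1, 1) with hx₀def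
  have hA₀app : ∀ (p : P) (x : ZMod n × P × Q),
      A₀ p x = ρ⁻¹ (plainPHom n P Q p (ρ x)) := by
    intro p x
    simp only [hA₀, MonoidHom.comp_apply, MulEquiv.coe_toMonoidHom, MulAut.conj_apply]
    rfl
  -- trajectory
  have traj : ∀ M : List (P × Q), M <:+ L →
      φ₀ (prodL M) x₀ = (((M.length : ℕ) : ZMod n), 1, 1) := by
    intro M
    induction M with
    | nil => simp [hx₀def]
    | cons p M' ih =>
        intro hsuf
        have hsuf' : M' <:+ L := (List.suffix_cons p M').trans hsuf
        have hlen : M'.length < n := by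
          have h1 := hsuf.length_le
          simp only [List.length_cons, hn] at h1 ⊢
          omega
        have hget : p = pr ⟨M'.length, hlen⟩ := by
          have hpre : (p :: M').reverse <+: R := by
            rw [hRdef]
            exact List.reverse_prefix.mpr hsuf
          have hlen2 : M'.length < (p :: M').reverse.length := by simp
          have h2 : (p :: M').reverse[M'.length]'hlen2 = p := by
            simp only [List.reverse_cons]
            exact List.getElem_concat_length (by simp) (by simp)
          have h3 := hpre.getElem hlen2
          rw [h2] at h3
          have h4 : pr ⟨M'.length, hlen⟩ = R[(M'.length : ℕ)]'(hlt ⟨M'.length, hlen⟩) := rfl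
          rw [h4]
          exact h3
        rw [prodL_cons, map_mul, map_mul]
        have happ : ∀ (σ τ μ : Equiv.Perm (ZMod n × P × Q)) (y : ZMod n × P × Q),
            (σ * τ * μ) y = σ (τ (μ y)) := fun _ _ _ _ => rfl
        rw [happ, ih hsuf']
        have hQ : φ₀ (Coprod.inr p.2) = plainQHom n P Q p.2 := by
          rw [hφ₀]; exact Coprod.lift_apply_inr _ _ _
        have hP : φ₀ (Coprod.inl p.1) = A₀ p.1 := by
          rw [hφ₀]; exact Coprod.lift_apply_inl _ _ _
        rw [hQ, hP, plainQHom_apply, mul_one]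
        have hsrc : ((M'.length : ZMod n), (1 : P), p.2)
            = srcF (Sum.inl ⟨M'.length, hlen⟩) := by
          simp only [hsrcdef, Sum.elim_inl]
          rw [← hget]
        rw [hsrc, hA₀app, hρ, htgtdef]
        simp only [Sum.elim_inl]
        rw [plainPHom_apply, mul_one]
        have htgt2 : (((M'.length : ℕ) : ZMod n), p.1, (1 : Q))
            = tgtF (Sum.inr ⟨M'.length, hlen⟩) := by
          simp only [htgtdef, Sum.elim_inr]
          rw [← hget]
        rw [htgt2, ← hρ (Sum.inr ⟨M'.length, hlen⟩)]
        simp only [hsrcdef, Sum.elim_inr, Equiv.Perm.inv_def, Equiv.symm_apply_apply]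
        simp [List.length_cons]
  have hx : φ₀ (prodL L) x₀ = x₀ := by
    rw [traj L (List.suffix_refl L), ← hn, ZMod.natCast_self, hx₀def]
  -- the counting function
  set istar : Fin n := ⟨n - 1, by omega⟩ with histar
  set f : ZMod n × P × Q → ℤ :=
    fun x => if x = srcF (Sum.inl istar) then 1 else 0 with hf
  have hphi : ∀ M : List (P × Q), M <:+ L →
      0 ≤ PhiF φ₀ f M x₀ ∧ (M.length = n → 1 ≤ PhiF φ₀ f M x₀) := by
    intro M
    induction M with
    | nil =>
        intro _
        constructor
        · simp [PhiF]
        · intro h0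
          exfalso
          simp only [List.length_nil] at h0
          omega
    | cons p M' ih =>
        intro hsuf
        have hsuf' : M' <:+ L := (List.suffix_cons p M').trans hsuf
        have hlen : M'.length < n := by
          have h1 := hsuf.length_le
          simp only [List.length_cons, hn] at h1 ⊢
          omega
        have hget : p = pr ⟨M'.length, hlen⟩ := by
          have hpre : (p :: M').reverse <+: R := by
            rw [hRdef]
            exact List.reverse_prefix.mpr hsuf
          have hlen2 : M'.length < (p :: M').reverse.length := by simp
          have h2 : (p :: M').reverse[M'.length]'hlen2 = p := by
            simp only [List.reverse_cons]
            exact List.getElem_concat_length (by simp) (by simp)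
          have h3 := hpre.getElem hlen2
          rw [h2] at h3
          have h4 : pr ⟨M'.length, hlen⟩ = R[(M'.length : ℕ)]'(hlt ⟨M'.length, hlen⟩) := rfl
          rw [h4]
          exact h3
        have hQ : φ₀ (Coprod.inr p.2) = plainQHom n P Q p.2 := by
          rw [hφ₀]; exact Coprod.lift_apply_inr _ _ _
        have hPhiCons : PhiF φ₀ f (p :: M') x₀
            = PhiF φ₀ f M' x₀
              + f (φ₀ (Coprod.inr p.2) (φ₀ (prodL M') x₀)) - f (φ₀ (prodL M') x₀) := rfl
        have htraj' := traj M' hsuf'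
        have hfmid : f (φ₀ (prodL M') x₀) = 0 := by
          rw [htraj']
          simp only [hf]
          apply if_neg
          intro hc
          have h2 := congrArg (fun z : ZMod n × P × Q => z.2.2) hc
          simp only [hsrcdef, Sum.elim_inl] at h2
          exact (hpr istar).2 h2.symm
        have hfafter : f (φ₀ (Coprod.inr p.2) (φ₀ (prodL M') x₀))
            = (if (⟨M'.length, hlen⟩ : Fin n) = istar then 1 else 0) := by
          rw [htraj', hQ, plainQHom_apply, mul_one]
          have hsrc : ((M'.length : ZMod n), (1 : P), p.2)
              = srcF (Sum.inl ⟨M'.length, hlen⟩) := by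
            simp only [hsrcdef, Sum.elim_inl]
            rw [← hget]
          rw [hsrc]
          simp only [hf]
          by_cases hc : (⟨M'.length, hlen⟩ : Fin n) = istar
          · rw [if_pos (by rw [hc]), if_pos hc]
          · rw [if_neg (fun hcc => hc (Sum.inl_injective (hsrcinj hcc))), if_neg hc]
        constructor
        · rw [hPhiCons, hfmid, hfafter]
          have h0 := (ih hsuf').1
          split <;> omega
        · intro hlen3
          simp only [List.length_cons] at hlen3
          rw [hPhiCons, hfmid, hfafter]
          have h0 := (ih hsuf').1
          have : (⟨M'.length, hlen⟩ : Fin n) = istar := by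
            rw [histar]
            exact Fin.mk_eq_mk.mpr (by omega)
          rw [if_pos this]
          omega
  have hΦ : 0 < PhiF φ₀ f L x₀ := by
    have := (hphi L (List.suffix_refl L)).2 (by rw [hn])
    omega
  obtain ⟨K, hK, hord⟩ := order_liftTwist φ₀ f L x₀ hx hΦ
  refine ⟨K, hK, ?_⟩
  intro l hl
  obtain ⟨m, hm, he⟩ := hord l hl
  haveI : NeZero m := ⟨hm.ne'⟩
  exact ⟨Equiv.Perm (ZMod m × (ZMod n × P × Q)), inferInstance, inferInstance,
    liftTwist φ₀ f m, he⟩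

end Core



section Phase1

variable {A B : Type*} [Group A] [Group B]

/-- letters -/
noncomputable def el : A ⊕ B → A ∗ B :=
  Sum.elim (fun a => (Coprod.inl a : A ∗ B)) (fun b => (Coprod.inr b : A ∗ B))

@[simp] theorem el_inl (a : A) : el (Sum.inl a : A ⊕ B) = Coprod.inl a := rfl
@[simp] theorem el_inr (b : B) : el (Sum.inr b : A ⊕ B) = Coprod.inr b := rfl

theorem exists_word (u : A ∗ B) : ∃ w : List (A ⊕ B), u = (w.map el).prod := by
  induction u using Monoid.Coprod.induction_on with
  | inl a => exact ⟨[Sum.inl a], by simp⟩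
  | inr b => exact ⟨[Sum.inr b], by simp⟩
  | mul x y hx hy =>
      obtain ⟨w1, hw1⟩ := hx
      obtain ⟨w2, hw2⟩ := hy
      exact ⟨w1 ++ w2, by simp [hw1, hw2]⟩

/-- reduced words -/
def IsRed (w : List (A ⊕ B)) : Prop :=
  List.IsChain (fun x y => x.isLeft ≠ y.isLeft) w ∧
    ∀ x ∈ w, x ≠ Sum.inl 1 ∧ x ≠ Sum.inr 1

theorem isRed_nil : IsRed ([] : List (A ⊕ B)) := ⟨List.isChain_nil, by simp⟩

theorem IsRed.tail {w : List (A ⊕ B)} (h : IsRed w) : IsRed w.tail :=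
  ⟨h.1.tail, fun x hx => h.2 x (List.mem_of_mem_tail hx)⟩

open Classical in
/-- smart cons -/
noncomputable def scons : A ⊕ B → List (A ⊕ B) → List (A ⊕ B)
  | Sum.inl a, [] => if a = 1 then [] else [Sum.inl a]
  | Sum.inr b, [] => if b = 1 then [] else [Sum.inr b]
  | Sum.inl a, Sum.inl a' :: t =>
      if a = 1 then Sum.inl a' :: t
      else if a * a' = 1 then t else Sum.inl (a * a') :: t
  | Sum.inl a, Sum.inr b' :: t =>
      if a = 1 then Sum.inr b' :: t else Sum.inl a :: Sum.inr b' :: t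
  | Sum.inr b, Sum.inl a' :: t =>
      if b = 1 then Sum.inl a' :: t else Sum.inr b :: Sum.inl a' :: t
  | Sum.inr b, Sum.inr b' :: t =>
      if b = 1 then Sum.inr b' :: t
      else if b * b' = 1 then t else Sum.inr (b * b') :: t

theorem scons_prod (x : A ⊕ B) (l : List (A ⊕ B)) :
    ((scons x l).map el).prod = el x * (l.map el).prod := by
  rcases x with a | b <;> rcases l with _ | ⟨y | y, t⟩ <;>
    simp only [scons] <;> split_ifs with h1 h2 <;>
    simp_all [mul_assoc, ← map_mul]
  · rw [← mul_assoc, ← map_mul, h2]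
    simp
  · rw [← mul_assoc, ← map_mul]
  · rw [← mul_assoc, ← map_mul, h2]
    simp
  · rw [← mul_assoc, ← map_mul]

theorem mem_red_ne {w : List (A ⊕ B)} (h : IsRed w) :
    ∀ x ∈ w, x ≠ Sum.inl 1 ∧ x ≠ Sum.inr 1 := h.2

theorem scons_red (x : A ⊕ B) (l : List (A ⊕ B)) (hl : IsRed l) : IsRed (scons x l) := by
  have hmemtail : ∀ {y : A ⊕ B} {t : List (A ⊕ B)}, IsRed (y :: t) →
      ∀ z ∈ t, z ≠ Sum.inl 1 ∧ z ≠ Sum.inr 1 :=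
    fun h z hz => h.2 z (List.mem_cons_of_mem _ hz)
  rcases l with _ | ⟨y, t⟩
  · rcases x with a | b <;> simp only [scons] <;> split_ifs with h1
    · exact isRed_nil
    · refine ⟨List.isChain_singleton _, ?_⟩
      intro z hz
      rcases List.mem_singleton.mp hz with rfl
      exact ⟨fun hc => h1 (by injection hc), fun hc => nomatch hc⟩
    · exact isRed_nil
    · refine ⟨List.isChain_singleton _, ?_⟩
      intro z hz
      rcases List.mem_singleton.mp hz with rfl
      exact ⟨fun hc => (nomatch hc), fun hc => h1 (by injection hc)⟩
  · have hchain := hl.1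
    rcases x with a | b <;> rcases y with y | y <;> simp only [scons] <;> split_ifs with h1 h2
    · exact hl
    · exact hl.tail
    · -- merged inl (a * y) :: t
      refine ⟨?_, ?_⟩
      · rw [List.isChain_cons] at hchain ⊢
        exact ⟨hchain.1, hchain.2⟩
      · intro z hz
        rcases List.mem_cons.mp hz with rfl | h
        · exact ⟨fun hc => h2 (by injection hc), fun hc => nomatch hc⟩
        · exact hmemtail hl z h
    · exact hl
    · -- inl a :: inr y :: t
      refine ⟨?_, ?_⟩
      · rw [List.isChain_cons_cons]
        exact ⟨by simp, hchain⟩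
      · intro z hz
        rcases List.mem_cons.mp hz with rfl | h
        · exact ⟨fun hc => h1 (by injection hc), fun hc => nomatch hc⟩
        · exact hl.2 z h
    · exact hl
    · -- inr b :: inl y :: t
      refine ⟨?_, ?_⟩
      · rw [List.isChain_cons_cons]
        exact ⟨by simp, hchain⟩
      · intro z hz
        rcases List.mem_cons.mp hz with rfl | h
        · exact ⟨fun hc => (nomatch hc), fun hc => h1 (by injection hc)⟩
        · exact hl.2 z h
    · exact hl
    · exact hl.tail
    · -- merged inr (b * y) :: t
      refine ⟨?_, ?_⟩
      · rw [List.isChain_cons] at hchain ⊢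
        exact ⟨hchain.1, hchain.2⟩
      · intro z hz
        rcases List.mem_cons.mp hz with rfl | h
        · exact ⟨fun hc => (nomatch hc), fun hc => h2 (by injection hc)⟩
        · exact hmemtail hl z h

/-- normal form -/
noncomputable def normalize : List (A ⊕ B) → List (A ⊕ B) :=
  List.foldr scons []

theorem normalize_red (w : List (A ⊕ B)) : IsRed (normalize w) := by
  induction w with
  | nil => exact isRed_nil
  | cons x t ih => exact scons_red x _ ih

theorem normalize_prod (w : List (A ⊕ B)) :
    ((normalize w).map el).prod = (w.map el).prod := by
  induction w with
  | nil => rfl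
  | cons x t ih =>
      show ((scons x (normalize t)).map el).prod = _
      rw [scons_prod, ih]
      simp

end Phase1

section Phase1b

variable {A B : Type*} [Group A] [Group B]


theorem pairing : ∀ (k : ℕ) (w : List (A ⊕ B)), w.length ≤ k → IsRed w →
    ∀ (mid : List (A ⊕ B)) (a : A) (b : B), w = Sum.inl a :: mid ++ [Sum.inr b] →
    ∃ LAB : List (A × B), LAB ≠ [] ∧ (∀ p ∈ LAB, p.1 ≠ 1 ∧ p.2 ≠ 1) ∧
      (w.map el).prod = prodL LAB := by
  intro k
  induction k with
  | zero =>
      intro w hlen _ mid a b hw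
      subst hw
      simp at hlen
  | succ k ih =>
      intro w hlen hred mid a b hw
      subst hw
      rcases mid with _ | ⟨y, mid'⟩
      · refine ⟨[(a, b)], by simp, ?_, ?_⟩
        · intro p hp
          rcases List.mem_singleton.mp hp with rfl
          constructor
          · intro hc
            exact (hred.2 (Sum.inl a) (by simp)).1 (congrArg Sum.inl hc)
          · intro hc
            exact (hred.2 (Sum.inr b) (by simp)).2 (congrArg Sum.inr hc)
        · simp [mul_assoc]
      · have hchain := hred.1
        obtain ⟨b₁, rfl⟩ : ∃ b₁ : B, y = Sum.inr b₁ := by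
          rcases y with y | y
          · exfalso
            have hch := hchain
            simp only [List.cons_append] at hch
            have := (List.isChain_cons_cons.mp hch).1
            simp at this
          · exact ⟨y, rfl⟩
        rcases mid' with _ | ⟨y₂, mid''⟩
        · exfalso
          have h2 := hchain.tail
          have := (List.isChain_cons_cons.mp h2).1
          simp at this
        · obtain ⟨a₂, rfl⟩ : ∃ a₂ : A, y₂ = Sum.inl a₂ := by
            rcases y₂ with y₂ | y₂
            · exact ⟨y₂, rfl⟩
            · exfalso
              have h2 := hchain.tail
              simp only [List.tail_cons, List.cons_append] at h2
              have := (List.isChain_cons_cons.mp h2).1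
              simp at this
          have hred₂ : IsRed (Sum.inl a₂ :: mid'' ++ [Sum.inr b]) := by
            have := hred.tail.tail
            simpa using this
          have hlen₂ : (Sum.inl a₂ :: mid'' ++ [Sum.inr b] : List (A ⊕ B)).length ≤ k := by
            simp only [List.length_cons, List.length_append, List.length_cons,
              List.length_nil, List.cons_append] at hlen ⊢
            omega
          obtain ⟨LAB₂, hne₂, hmem₂, hprod₂⟩ := ih _ hlen₂ hred₂ mid'' a₂ b rfl
          refine ⟨(a, b₁) :: LAB₂, by simp, ?_, ?_⟩
          · intro p hp
            rcases List.mem_cons.mp hp with rfl | hp'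
            · constructor
              · intro hc
                exact (hred.2 (Sum.inl a) (by simp)).1 (congrArg Sum.inl hc)
              · intro hc
                exact (hred.2 (Sum.inr b₁) (by simp)).2 (congrArg Sum.inr hc)
            · exact hmem₂ p hp'
          · have hshape : (Sum.inl a :: (Sum.inr b₁ :: Sum.inl a₂ :: mid'') ++ [Sum.inr b]
                : List (A ⊕ B))
                = Sum.inl a :: Sum.inr b₁ :: (Sum.inl a₂ :: mid'' ++ [Sum.inr b]) := by
              simp
            rw [hshape, List.map_cons, List.map_cons, List.prod_cons, List.prod_cons,
              hprod₂, prodL_cons]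
            simp [mul_assoc]

/-- the dichotomy predicate -/
def PGood (u : A ∗ B) : Prop :=
  (∃ g : A ∗ B, g * u * g⁻¹ ∈ (Coprod.inl : A →* A ∗ B).range ∨
      g * u * g⁻¹ ∈ (Coprod.inr : B →* A ∗ B).range) ∨
  (∃ (g : A ∗ B) (L : List (A × B)), L ≠ [] ∧ (∀ p ∈ L, p.1 ≠ 1 ∧ p.2 ≠ 1) ∧
      u = g * prodL L * g⁻¹)

theorem PGood.conj {u : A ∗ B} (h : PGood u) (c : A ∗ B) : PGood (c * u * c⁻¹) := by
  rcases h with ⟨g, hg⟩ | ⟨g, L, h1, h2, h3⟩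
  · left
    refine ⟨g * c⁻¹, ?_⟩
    have he : g * c⁻¹ * (c * u * c⁻¹) * (g * c⁻¹)⁻¹ = g * u * g⁻¹ := by group
    rw [he]
    exact hg
  · right
    exact ⟨c * g, L, h1, h2, by rw [h3]; group⟩

theorem key_lemma : ∀ (k : ℕ) (w : List (A ⊕ B)), w.length ≤ k → IsRed w →
    PGood ((w.map el).prod) := by
  intro k
  induction k with
  | zero =>
      intro w hlen _
      have : w = [] := List.length_eq_zero_iff.mp (by omega)
      subst this
      exact Or.inl ⟨1, Or.inl ⟨1, by simp⟩⟩
  | succ k ih =>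
      intro w hlen hred
      rcases w with _ | ⟨x, w'⟩
      · exact Or.inl ⟨1, Or.inl ⟨1, by simp⟩⟩
      rcases w' with _ | ⟨y, rest⟩
      · rcases x with a | b
        · exact Or.inl ⟨1, Or.inl ⟨a, by simp⟩⟩
        · exact Or.inl ⟨1, Or.inr ⟨b, by simp⟩⟩
      · obtain ⟨mid, z, hmz⟩ : ∃ mid z, (y :: rest : List (A ⊕ B)) = mid ++ [z] := by
          rcases List.eq_nil_or_concat (y :: rest) with h | ⟨mid, z, h⟩
          · exact absurd h (by simp)
          · exact ⟨mid, z, by rw [h]; simp⟩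
        rw [hmz] at hred ⊢
        have hlen' : mid.length + 2 ≤ k + 1 := by
          have := hlen
          rw [hmz] at this
          simpa using this
        rcases x with a | b <;> rcases z with a'' | b''
        · -- inl a ... inl a'' : cyclic merge
          have hmidred : IsRed mid := by
            refine ⟨(List.isChain_append.mp hred.1.tail).1, ?_⟩
            intro t ht
            exact hred.2 t (by simp [ht])
          have hrel : ∀ xx ∈ mid.getLast?, (xx : A ⊕ B).isLeft ≠ (Sum.inl a'' : A ⊕ B).isLeft := by
            have h2 := List.isChain_append.mp hred.1.tail
            intro xx hxx
            exact h2.2.2 xx hxx (Sum.inl a'') (by simp)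
          have hprodw : (((Sum.inl a :: (mid ++ [Sum.inl a''])).map el).prod : A ∗ B)
              = Coprod.inl a * ((mid.map el).prod * Coprod.inl a'') := by
            simp [mul_assoc]
          by_cases hc : a'' * a = 1
          · have hP := ih mid (by omega) hmidred
            have ha'' : (Coprod.inl a'' : A ∗ B) = (Coprod.inl a)⁻¹ := by
              rw [eq_inv_of_mul_eq_one_left hc, map_inv]
            have he : (((Sum.inl a :: (mid ++ [Sum.inl a''])).map el).prod : A ∗ B)
                = Coprod.inl a * (mid.map el).prod * (Coprod.inl a)⁻¹ := by
              rw [hprodw, ha'']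
              group
            rw [he]
            exact hP.conj _
          · set mid₂ : List (A ⊕ B) := mid ++ [Sum.inl (a'' * a)] with hmid₂
            have hred₂ : IsRed mid₂ := by
              constructor
              · rw [hmid₂, List.isChain_append]
                refine ⟨hmidred.1, List.isChain_singleton _, ?_⟩
                intro xx hxx yy hyy
                simp only [List.head?_cons, Option.mem_def, Option.some.injEq] at hyy
                subst hyy
                simpa using hrel xx hxx
              · intro t ht
                rw [hmid₂, List.mem_append] at ht
                rcases ht with ht | ht
                · exact hmidred.2 t ht
                · rcases List.mem_singleton.mp ht with rfl
                  exact ⟨fun hcc => hc (by injection hcc), fun hcc => nomatch hcc⟩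
            have hP := ih mid₂ (by rw [hmid₂]; simp; omega) hred₂
            have he : (((Sum.inl a :: (mid ++ [Sum.inl a''])).map el).prod : A ∗ B)
                = Coprod.inl a * ((mid₂.map el).prod) * (Coprod.inl a)⁻¹ := by
              rw [hprodw, hmid₂]
              simp only [List.map_append, List.map_cons, List.map_nil, List.prod_append,
                List.prod_cons, List.prod_nil, el_inl]
              rw [map_mul]
              group
            rw [he]
            exact hP.conj _
        · -- inl a ... inr b'' : already good
          obtain ⟨LAB, h1, h2, h3⟩ := pairing (Sum.inl a :: mid ++ [Sum.inr b'']).length _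
            le_rfl hred mid a b'' rfl
          right
          refine ⟨1, LAB, h1, h2, ?_⟩
          rw [one_mul, inv_one, mul_one]
          exact h3
        · -- inr b ... inl a'' : rotate
          have hrel : ∀ xx ∈ mid.getLast?, (xx : A ⊕ B).isLeft ≠ (Sum.inl a'' : A ⊕ B).isLeft := by
            have h2 := List.isChain_append.mp hred.1.tail
            intro xx hxx
            exact h2.2.2 xx hxx (Sum.inl a'') (by simp)
          set w₃ : List (A ⊕ B) := mid ++ [Sum.inl a'', Sum.inr b] with hw₃
          have hred₃ : IsRed w₃ := by
            constructor
            · rw [hw₃, List.isChain_append]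
              refine ⟨(List.isChain_append.mp hred.1.tail).1, ?_, ?_⟩
              · rw [List.isChain_cons_cons]
                exact ⟨by simp, List.isChain_singleton _⟩
              · intro xx hxx yy hyy
                simp only [List.head?_cons, Option.mem_def, Option.some.injEq] at hyy
                subst hyy
                exact hrel xx hxx
            · intro t ht
              rw [hw₃, List.mem_append] at ht
              rcases ht with ht | ht
              · exact hred.2 t (by simp [ht])
              · rcases List.mem_cons.mp ht with rfl | ht'
                · exact hred.2 (Sum.inl a'') (by simp)
                · rcases List.mem_singleton.mp ht' with rfl
                  exact hred.2 (Sum.inr b) (by simp)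
          -- decompose w₃ for pairing
          have hpair : ∃ LAB : List (A × B), LAB ≠ [] ∧
              (∀ p ∈ LAB, p.1 ≠ 1 ∧ p.2 ≠ 1) ∧ (w₃.map el).prod = prodL LAB := by
            rcases mid with _ | ⟨y₀, mid'⟩
            · exact pairing w₃.length _ le_rfl hred₃ [] a'' b (by rw [hw₃]; simp)
            · obtain ⟨a₀, rfl⟩ : ∃ a₀ : A, y₀ = Sum.inl a₀ := by
                rcases y₀ with y₀ | y₀
                · exact ⟨y₀, rfl⟩
                · exfalso
                  have hch := hred.1
                  simp only [List.cons_append] at hch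
                  have := (List.isChain_cons_cons.mp hch).1
                  simp at this
              exact pairing w₃.length _ le_rfl hred₃ (mid' ++ [Sum.inl a'']) a₀ b
                (by rw [hw₃]; simp)
          obtain ⟨LAB, h1, h2, h3⟩ := hpair
          right
          refine ⟨Coprod.inr b, LAB, h1, h2, ?_⟩
          rw [← h3, hw₃]
          simp only [List.map_append, List.map_cons, List.map_nil, List.prod_append,
            List.prod_cons, List.prod_nil, el_inl, el_inr]
          group
        · -- inr b ... inr b'' : cyclic merge (symmetric)
          have hmidred : IsRed mid := by
            refine ⟨(List.isChain_append.mp hred.1.tail).1, ?_⟩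
            intro t ht
            exact hred.2 t (by simp [ht])
          have hrel : ∀ xx ∈ mid.getLast?, (xx : A ⊕ B).isLeft ≠ (Sum.inr b'' : A ⊕ B).isLeft := by
            have h2 := List.isChain_append.mp hred.1.tail
            intro xx hxx
            exact h2.2.2 xx hxx (Sum.inr b'') (by simp)
          have hprodw : (((Sum.inr b :: (mid ++ [Sum.inr b''])).map el).prod : A ∗ B)
              = Coprod.inr b * ((mid.map el).prod * Coprod.inr b'') := by
            simp [mul_assoc]
          by_cases hc : b'' * b = 1
          · have hP := ih mid (by omega) hmidred
            have hb'' : (Coprod.inr b'' : A ∗ B) = (Coprod.inr b)⁻¹ := by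
              rw [eq_inv_of_mul_eq_one_left hc, map_inv]
            have he : (((Sum.inr b :: (mid ++ [Sum.inr b''])).map el).prod : A ∗ B)
                = Coprod.inr b * (mid.map el).prod * (Coprod.inr b)⁻¹ := by
              rw [hprodw, hb'']
              group
            rw [he]
            exact hP.conj _
          · set mid₂ : List (A ⊕ B) := mid ++ [Sum.inr (b'' * b)] with hmid₂
            have hred₂ : IsRed mid₂ := by
              constructor
              · rw [hmid₂, List.isChain_append]
                refine ⟨hmidred.1, List.isChain_singleton _, ?_⟩
                intro xx hxx yy hyy
                simp only [List.head?_cons, Option.mem_def, Option.some.injEq] at hyy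
                subst hyy
                simpa using hrel xx hxx
              · intro t ht
                rw [hmid₂, List.mem_append] at ht
                rcases ht with ht | ht
                · exact hmidred.2 t ht
                · rcases List.mem_singleton.mp ht with rfl
                  exact ⟨fun hcc => (nomatch hcc), fun hcc => hc (by injection hcc)⟩
            have hP := ih mid₂ (by rw [hmid₂]; simp; omega) hred₂
            have he : (((Sum.inr b :: (mid ++ [Sum.inr b''])).map el).prod : A ∗ B)
                = Coprod.inr b * ((mid₂.map el).prod) * (Coprod.inr b)⁻¹ := by
              rw [hprodw, hmid₂]
              simp only [List.map_append, List.map_cons, List.map_nil, List.prod_append,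
                List.prod_cons, List.prod_nil, el_inr]
              rw [map_mul]
              group
            rw [he]
            exact hP.conj _

theorem exists_good (u : A ∗ B)
    (hu : ¬ ∃ g : A ∗ B,
        g * u * g⁻¹ ∈ (Coprod.inl : A →* A ∗ B).range ∨
        g * u * g⁻¹ ∈ (Coprod.inr : B →* A ∗ B).range) :
    ∃ (g : A ∗ B) (L : List (A × B)), L ≠ [] ∧ (∀ p ∈ L, p.1 ≠ 1 ∧ p.2 ≠ 1) ∧
      u = g * prodL L * g⁻¹ := by
  obtain ⟨w, hw⟩ := exists_word u
  have h1 : u = ((normalize w).map el).prod := by rw [normalize_prod]; exact hw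
  have h2 := key_lemma (normalize w).length (normalize w) le_rfl (normalize_red w)
  rw [← h1] at h2
  rcases h2 with h | h
  · exact absurd h hu
  · exact h

end Phase1b


section Assembly

open Monoid

theorem sep_list {A : Type*} [Group A]
    (hA : ∀ a : A, a ≠ 1 → ∃ (F : Type) (_ : Group F) (_ : Finite F) (ψ : A →* F), ψ a ≠ 1)
    (la : List A) (hla : ∀ a ∈ la, a ≠ 1) :
    ∃ (P : Type) (_ : Group P) (_ : Finite P) (ψ : A →* P), ∀ a ∈ la, ψ a ≠ 1 := by
  induction la with
  | nil => exact ⟨PUnit, inferInstance, inferInstance, 1, by simp⟩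
  | cons a t ih =>
      obtain ⟨F₁, i1, i2, ψ₁, h₁⟩ := hA a (hla a (List.mem_cons_self))
      obtain ⟨F₂, j1, j2, ψ₂, h₂⟩ := ih (fun x hx => hla x (List.mem_cons_of_mem _ hx))
      refine ⟨F₁ × F₂, inferInstance, inferInstance, ψ₁.prod ψ₂, ?_⟩
      intro x hx
      rcases List.mem_cons.mp hx with rfl | hx'
      · exact fun hc => h₁ (congrArg Prod.fst hc)
      · exact fun hc => (h₂ x hx') (congrArg Prod.snd hc)

theorem map_prodL {A B P Q : Type*} [Group A] [Group B] [Group P] [Group Q]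
    (ψA : A →* P) (ψB : B →* Q) (L : List (A × B)) :
    Coprod.map ψA ψB (prodL L) = prodL (L.map fun p => (ψA p.1, ψB p.2)) := by
  induction L with
  | nil => simp
  | cons p t ih =>
      rw [prodL_cons, map_mul, map_mul, List.map_cons, prodL_cons, ih,
        Coprod.map_apply_inl, Coprod.map_apply_inr]

theorem orderOf_conj'' {G : Type*} [Group G] (x c : G) :
    orderOf (c * x * c⁻¹) = orderOf x := by
  have h := orderOf_injective (MulAut.conj c).toMonoidHom (MulAut.conj c).injective x
  simpa [MulAut.conj_apply] using h

end Assembly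

end FPOrder

open FPOrder Monoid in
/-- Let `G = A ∗ B` be the free product of two residually finite groups
and let `u ∈ G` lie in no conjugate of `A` or `B`. Then there is `K > 0` such that for
every positive integer `l` there is a surjection `φ` of `G` onto a finite group with
`orderOf (φ u) = K * l`. -/
theorem freeProduct_single_element_order_control
    {A B : Type*} [Group A] [Group B]
    (hA : ∀ a : A, a ≠ 1 → ∃ (F : Type) (_ : Group F) (_ : Finite F) (ψ : A →* F), ψ a ≠ 1)
    (hB : ∀ b : B, b ≠ 1 → ∃ (F : Type) (_ : Group F) (_ : Finite F) (ψ : B →* F), ψ b ≠ 1)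
    (u : A ∗ B)
    (hu : ¬ ∃ g : A ∗ B,
        g * u * g⁻¹ ∈ (Monoid.Coprod.inl : A →* A ∗ B).range ∨
        g * u * g⁻¹ ∈ (Monoid.Coprod.inr : B →* A ∗ B).range) :
    ∃ K : ℕ, 0 < K ∧ ∀ l : ℕ, 0 < l →
      ∃ (H : Type) (_ : Group H) (_ : Finite H) (φ : A ∗ B →* H),
        Function.Surjective φ ∧ orderOf (φ u) = K * l := by
  classical
  obtain ⟨g, LAB, hne, hmem, hueq⟩ := exists_good u hu
  obtain ⟨P, iP1, iP2, ψA, hψA⟩ := sep_list hA (LAB.map Prod.fst) (by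
    intro a ha
    obtain ⟨p, hp, rfl⟩ := List.mem_map.mp ha
    exact (hmem p hp).1)
  obtain ⟨Q, iQ1, iQ2, ψB, hψB⟩ := sep_list hB (LAB.map Prod.snd) (by
    intro b hb
    obtain ⟨p, hp, rfl⟩ := List.mem_map.mp hb
    exact (hmem p hp).2)
  set L' : List (P × Q) := LAB.map (fun p => (ψA p.1, ψB p.2)) with hL'
  have hL'ne : L' ≠ [] := by
    rw [hL']
    simpa using hne
  have hL'mem : ∀ p ∈ L', p.1 ≠ 1 ∧ p.2 ≠ 1 := by
    intro p hp
    rw [hL'] at hp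
    obtain ⟨q, hq, rfl⟩ := List.mem_map.mp hp
    exact ⟨hψA _ (List.mem_map.mpr ⟨q, hq, rfl⟩), hψB _ (List.mem_map.mpr ⟨q, hq, rfl⟩)⟩
  obtain ⟨K, hK, hcore⟩ := core_theorem L' hL'ne hL'mem
  refine ⟨K, hK, ?_⟩
  intro l hl
  obtain ⟨H0, iH1, iH2, φ0, hord⟩ := hcore l hl
  set ψ : A ∗ B →* P ∗ Q := Coprod.map ψA ψB with hψ
  set φfull : A ∗ B →* H0 := φ0.comp ψ with hφfull
  refine ⟨φfull.range, inferInstance, inferInstance, φfull.rangeRestrict,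
    MonoidHom.rangeRestrict_surjective _, ?_⟩
  have h1 : orderOf (φfull.rangeRestrict u) = orderOf (φfull u) := by
    have := orderOf_injective (φfull.range.subtype) φfull.range.subtype_injective
      (φfull.rangeRestrict u)
    simpa using this.symm
  have h2 : φfull u = (φ0 (ψ g)) * (φ0 (prodL L')) * (φ0 (ψ g))⁻¹ := by
    rw [hφfull, MonoidHom.comp_apply, hueq, map_mul, map_mul, map_mul, map_mul, map_inv,
      map_inv, hψ, map_prodL, ← hL']
  rw [h1, h2, orderOf_conj'', hord]
end

section
/- Let G = A ∗ B be the free product of two finite groups A and B, let q ∈ G, and let S be a finite subset of G disjoint from the cyclic subgroup ⟨q⟩ generated by q. Then there exists a finite group H and a group homomorphism φ : G → H such that the image φ(S) is disjoint from the cyclic subgroup generated by φ(q), i.e., for every s ∈ S and every integer k, φ(s) ≠ φ(q)^k. -/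
open scoped Monoid.Coprod

namespace FPSep
set_option linter.unusedSectionVars false

open Monoid Monoid.CoprodI

variable {ι : Type*} {M : ι → Type*} [∀ i, Group (M i)] [DecidableEq ι]
  [∀ i, DecidableEq (M i)]

noncomputable def len (g : CoprodI M) : ℕ := (Word.equiv (M := M) g).toList.length

lemma equiv_prod (w : Word M) : Word.equiv (M := M) w.prod = w :=
  Word.equiv.apply_symm_apply w

lemma prod_equiv (g : CoprodI M) : (Word.equiv (M := M) g).prod = g :=
  Word.equiv.symm_apply_apply g

lemma len_one : len (1 : CoprodI M) = 0 := by
  have h : (1 : CoprodI M) = Word.prod (Word.empty : Word M) := by simp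
  rw [len, h, equiv_prod]
  rfl

lemma exists_head {w : Word M} {i : ι} (h : Word.fstIdx w = some i) :
    ∃ (x : M i) (t : List (Σ j, M j)), w.toList = ⟨i, x⟩ :: t := by
  rcases hw : w.toList with _ | ⟨⟨j, x⟩, t⟩
  · rw [Word.fstIdx, hw] at h; simp at h
  · rw [Word.fstIdx, hw] at h
    simp only [List.head?_cons, Option.map_some] at h
    obtain rfl : j = i := by simpa using h
    exact ⟨x, t, rfl⟩

lemma equiv_of_mul_of_ne {i : ι} {a : M i} (ha : a ≠ 1) {g : CoprodI M}
    (h : Word.fstIdx (Word.equiv g) ≠ some i) :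
    (Word.equiv (of a * g)).toList = ⟨i, a⟩ :: (Word.equiv g).toList := by
  have hp : of a * g = Word.prod (Word.cons a (Word.equiv g) h ha) := by
    rw [Word.prod_cons, prod_equiv]
  rw [hp, equiv_prod]
  rfl

lemma equiv_of_mul_head {i : ι} (a : M i) {g : CoprodI M} {x : M i} {t : List (Σ j, M j)}
    (hg : (Word.equiv g).toList = ⟨i, x⟩ :: t) :
    (Word.equiv (of a * g)).toList = if a * x = 1 then t else ⟨i, a * x⟩ :: t := by
  set w := Word.equiv (M := M) g with hw
  have hne : ∀ l ∈ t, Sigma.snd l ≠ 1 := fun l hl =>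
    w.ne_one l (by rw [hg]; exact List.mem_cons_of_mem _ hl)
  have hchain : t.Chain' fun l l' => Sigma.fst l ≠ Sigma.fst l' := by
    have := w.chain_ne; rw [hg] at this; exact this.tail
  set tw : Word M := ⟨t, hne, hchain⟩ with htw
  have htfst : Word.fstIdx tw ≠ some i := by
    have hc := w.chain_ne; rw [hg] at hc
    cases t with
    | nil => simp [Word.fstIdx, htw]
    | cons p t' =>
      have hip : (⟨i, x⟩ : Σ j, M j).fst ≠ p.fst := (List.isChain_cons_cons.mp hc).1
      simp only [Word.fstIdx, htw, List.head?_cons, Option.map_some, ne_eq,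
        Option.some.injEq]
      exact fun hpi => hip (by simpa using hpi.symm)
  have hgprod : g = of x * Word.prod tw := by
    conv_lhs => rw [← prod_equiv g]
    rw [← hw, Word.prod, hg, List.map_cons, List.prod_cons]
    rfl
  by_cases hax : a * x = 1
  · have hp : of a * g = Word.prod tw := by
      rw [hgprod, ← mul_assoc, ← MonoidHom.map_mul, hax, MonoidHom.map_one, one_mul]
    rw [hp, equiv_prod, if_pos hax]
  · have hp : of a * g = Word.prod (Word.cons (a * x) tw htfst hax) := by
      rw [Word.prod_cons, hgprod, ← mul_assoc, ← MonoidHom.map_mul]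
    rw [hp, equiv_prod, if_neg hax]
    rfl

lemma len_of_mul_of_head {i : ι} (a : M i) {g : CoprodI M}
    (h : Word.fstIdx (Word.equiv g) = some i) :
    len (of a * g) ≤ len g ∧
      (len (of a * g) = len g → Word.fstIdx (Word.equiv (of a * g)) = some i) := by
  obtain ⟨x, t, hg⟩ := exists_head h
  have hlen : len g = t.length + 1 := by rw [len, hg]; rfl
  have := equiv_of_mul_head a hg
  by_cases hax : a * x = 1
  · rw [if_pos hax] at this
    constructor
    · rw [len, this, hlen]; omega
    · intro hh; rw [len, this, hlen] at hh; omega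
  · rw [if_neg hax] at this
    constructor
    · rw [len, this, hlen]; simp
    · intro _; rw [Word.fstIdx, this]; rfl

lemma len_of_mul_of_ne {i : ι} {a : M i} (ha : a ≠ 1) {g : CoprodI M}
    (h : Word.fstIdx (Word.equiv g) ≠ some i) :
    len (of a * g) = len g + 1 ∧ Word.fstIdx (Word.equiv (of a * g)) = some i := by
  have := equiv_of_mul_of_ne ha h
  constructor
  · rw [len, this]; rfl
  · rw [Word.fstIdx, this]; rfl

lemma len_of_mul_le {i : ι} (a : M i) (g : CoprodI M) : len (of a * g) ≤ len g + 1 := by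
  by_cases ha : a = 1
  · subst ha; rw [MonoidHom.map_one, one_mul]; omega
  by_cases h : Word.fstIdx (Word.equiv g) = some i
  · exact le_trans (len_of_mul_of_head a h).1 (by omega)
  · exact le_of_eq (len_of_mul_of_ne ha h).1

end FPSep

namespace FPSep
set_option linter.unusedSectionVars false

open Monoid Monoid.CoprodI

variable {ι : Type*} {M : ι → Type*} [∀ i, Group (M i)] [DecidableEq ι]
  [∀ i, DecidableEq (M i)]

variable (H : Subgroup (CoprodI M)) (m : ℕ)

noncomputable def nu (c : CoprodI M ⧸ H) : ℕ :=
  sInf {n | ∃ g, (QuotientGroup.mk g : CoprodI M ⧸ H) = c ∧ len g = n}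

lemma nu_le {c : CoprodI M ⧸ H} {g : CoprodI M}
    (hg : (QuotientGroup.mk g : CoprodI M ⧸ H) = c) : nu H c ≤ len g :=
  Nat.sInf_le ⟨g, hg, rfl⟩

lemma exists_minrep (c : CoprodI M ⧸ H) :
    ∃ g, (QuotientGroup.mk g : CoprodI M ⧸ H) = c ∧ len g = nu H c := by
  have hne : {n | ∃ g, (QuotientGroup.mk g : CoprodI M ⧸ H) = c ∧ len g = n}.Nonempty := by
    obtain ⟨g, hg⟩ := QuotientGroup.mk_surjective c
    exact ⟨len g, g, hg, rfl⟩
  exact Nat.sInf_mem hne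

lemma mk_of_mul_eq_smul (a : CoprodI M) (g : CoprodI M) :
    (QuotientGroup.mk (a * g) : CoprodI M ⧸ H) = a • (QuotientGroup.mk g) := rfl

lemma nu_smul_le {i : ι} (a : M i) (c : CoprodI M ⧸ H) :
    nu H (of a • c) ≤ nu H c + 1 := by
  obtain ⟨g, hg, hlen⟩ := exists_minrep H c
  have : (QuotientGroup.mk (of a * g) : CoprodI M ⧸ H) = of a • c := by rw [← hg]; rfl
  exact le_trans (nu_le H this) (by rw [← hlen]; exact len_of_mul_le a g)

/-- `Led i c`: the coset `c` has a representative of length `m` starting with an `i`-letter. -/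
def Led (i : ι) (c : CoprodI M ⧸ H) : Prop :=
  ∃ g, (QuotientGroup.mk g : CoprodI M ⧸ H) = c ∧ len g = m ∧
    Word.fstIdx (Word.equiv g) = some i

def Good (i : ι) (c : CoprodI M ⧸ H) : Prop :=
  nu H c < m ∨ (nu H c = m ∧ Led H m i c)

lemma good_smul {i : ι} (a : M i) {c : CoprodI M ⧸ H} (hc : nu H c ≤ m)
    (h : Good H m i c) : nu H (of a • c) ≤ m ∧ Good H m i (of a • c) := by
  rcases h with h1 | ⟨h2, g, hg, hlen, hfst⟩
  · have hle : nu H (of a • c) ≤ nu H c + 1 := nu_smul_le H a c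
    have hlem : nu H (of a • c) ≤ m := by omega
    refine ⟨hlem, ?_⟩
    rcases lt_or_eq_of_le hlem with hlt | heq
    · exact Or.inl hlt
    · -- nu (a • c) = m, so nu c = m - 1
      have hnc : nu H c + 1 = m := by omega
      obtain ⟨g, hg, hlg⟩ := exists_minrep H c
      by_cases ha : a = 1
      · exfalso
        rw [ha] at heq
        rw [MonoidHom.map_one, one_smul] at heq
        omega
      by_cases hf : Word.fstIdx (Word.equiv g) = some i
      · exfalso
        have hmk : (QuotientGroup.mk (of a * g) : CoprodI M ⧸ H) = of a • c := by
          rw [← hg]; rfl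
        have := le_trans (nu_le H hmk) (len_of_mul_of_head a hf).1
        omega
      · obtain ⟨hl, hfi⟩ := len_of_mul_of_ne ha hf
        refine Or.inr ⟨heq, of a * g, by rw [← hg]; rfl, by omega, hfi⟩
  · obtain ⟨x, t, hgl⟩ := exists_head hfst
    have hlent : len g = t.length + 1 := by rw [len, hgl]; rfl
    have heqt := equiv_of_mul_head a hgl
    have hmk : (QuotientGroup.mk (of a * g) : CoprodI M ⧸ H) = of a • c := by
      rw [← hg]; rfl
    by_cases hax : a * x = 1
    · rw [if_pos hax] at heqt
      have hlen2 : len (of a * g) = t.length := by rw [len, heqt]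
      have : nu H (of a • c) ≤ t.length := by rw [← hlen2]; exact nu_le H hmk
      exact ⟨by omega, Or.inl (by omega)⟩
    · rw [if_neg hax] at heqt
      have hlen2 : len (of a * g) = t.length + 1 := by rw [len, heqt]; rfl
      have hnule : nu H (of a • c) ≤ m := by
        rw [← hlen, hlent, ← hlen2]; exact nu_le H hmk
      refine ⟨hnule, ?_⟩
      rcases lt_or_eq_of_le hnule with hlt | heq
      · exact Or.inl hlt
      · refine Or.inr ⟨heq, of a * g, hmk, by omega, ?_⟩
        rw [Word.fstIdx, heqt]; rfl

end FPSep

namespace FPSep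
set_option linter.unusedSectionVars false
open Monoid Monoid.CoprodI

variable {ι : Type*} {M : ι → Type*} [∀ i, Group (M i)] [DecidableEq ι]
  [∀ i, DecidableEq (M i)]

variable (H : Subgroup (CoprodI M)) (m : ℕ)

/-- The finite window of the coset space. -/
def X := {c : CoprodI M ⧸ H // nu H c ≤ m}

open Classical in
noncomputable def act {i : ι} (a : M i) (c : X H m) : X H m :=
  if h : Good H m i c.1 then ⟨of a • c.1, (good_smul H m a c.2 h).1⟩ else c

lemma act_good {i : ι} (a : M i) (c : X H m) (h : Good H m i c.1) :
    (act H m a c).1 = of a • c.1 := by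
  rw [show act H m a c = ⟨of a • c.1, (good_smul H m a c.2 h).1⟩ from dif_pos h]

lemma good_act {i : ι} (a : M i) (c : X H m) (h : Good H m i c.1) :
    Good H m i (act H m a c).1 := by
  rw [show act H m a c = ⟨of a • c.1, (good_smul H m a c.2 h).1⟩ from dif_pos h]
  exact (good_smul H m a c.2 h).2

lemma act_bad {i : ι} (a : M i) (c : X H m) (h : ¬ Good H m i c.1) :
    act H m a c = c := by
  exact dif_neg h

lemma act_one {i : ι} (c : X H m) : act H m (1 : M i) c = c := by
  by_cases h : Good H m i c.1
  · apply Subtype.ext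
    rw [act_good H m _ _ h, MonoidHom.map_one, one_smul]
  · exact act_bad H m _ _ h

lemma act_mul {i : ι} (a b : M i) (c : X H m) :
    act H m a (act H m b c) = act H m (a * b) c := by
  by_cases h : Good H m i c.1
  · apply Subtype.ext
    rw [act_good H m (a := a) _ (good_act H m b c h), act_good H m b c h,
      act_good H m (a * b) c h, MonoidHom.map_mul, mul_smul]
  · rw [act_bad H m b c h, act_bad H m a c h, act_bad H m (a*b) c h]

noncomputable def permOf {i : ι} (a : M i) : Equiv.Perm (X H m) where
  toFun := act H m a
  invFun := act H m a⁻¹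
  left_inv c := by rw [act_mul, inv_mul_cancel, act_one]
  right_inv c := by rw [act_mul, mul_inv_cancel, act_one]

noncomputable def homOf (i : ι) : M i →* Equiv.Perm (X H m) where
  toFun := permOf H m
  map_one' := Equiv.ext fun c => act_one H m c
  map_mul' a b := Equiv.ext fun c => (act_mul H m a b c).symm

noncomputable def Φ : CoprodI M →* Equiv.Perm (X H m) := CoprodI.lift (homOf H m)

noncomputable def x0 : X H m :=
  ⟨QuotientGroup.mk 1, by
    refine le_trans (nu_le H rfl) ?_
    rw [len_one]; omega⟩

lemma len_listProd_le (l : List (Σ i, M i)) :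
    len ((l.map fun p => of p.snd).prod : CoprodI M) ≤ l.length := by
  induction l with
  | nil => simp [len_one]
  | cons p t ih =>
    rw [List.map_cons, List.prod_cons]
    refine le_trans (len_of_mul_le p.snd _) ?_
    simpa using ih

lemma eval (l : List (Σ i, M i)) (hl : l.length < m) :
    ((Φ H m ((l.map fun p => of p.snd).prod)) (x0 H m)).1 =
      QuotientGroup.mk ((l.map fun p => of p.snd).prod) := by
  induction l with
  | nil =>
    simp only [List.map_nil, List.prod_nil, map_one]
    rfl
  | cons p t ih =>
    have ht : t.length < m := by
      simp only [List.length_cons] at hl; omega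
    have ihv := ih ht
    rw [List.map_cons, List.prod_cons, map_mul, Equiv.Perm.mul_apply]
    have hφ : Φ H m (of p.snd) = permOf H m p.snd := CoprodI.lift_of _ _
    rw [hφ]
    set c := (Φ H m ((t.map fun p => of p.snd).prod)) (x0 H m) with hc
    have hgood : Good H m p.fst c.1 := by
      rw [ihv]
      exact Or.inl (lt_of_le_of_lt (le_trans (nu_le H rfl) (len_listProd_le t)) ht)
    have h1 : ((permOf H m p.snd) c).1 = of p.snd • c.1 := act_good H m p.snd c hgood
    rw [h1, ihv]
    rfl

end FPSep

namespace FPSep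
set_option linter.unusedSectionVars false
open Monoid Monoid.CoprodI

variable {ι : Type*} {M : ι → Type*} [∀ i, Group (M i)] [DecidableEq ι]
  [∀ i, DecidableEq (M i)]

variable (H : Subgroup (CoprodI M)) (m : ℕ)

lemma finiteX [Finite ι] [∀ i, Finite (M i)] : Finite (X H m) := by
  have hfin : Finite {l : List (Σ i, M i) // l.length ≤ m} :=
    (List.finite_length_le (Σ i, M i) m).to_subtype
  open Classical in
  refine Finite.of_surjective (α := {l : List (Σ i, M i) // l.length ≤ m})
    (fun l => if h : nu H (QuotientGroup.mk ((l.1.map fun p => of p.snd).prod)) ≤ m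
      then ⟨_, h⟩ else x0 H m) ?_
  rintro ⟨c, hc⟩
  obtain ⟨g, hg, hlen⟩ := exists_minrep H c
  have hl : ((Word.equiv (M := M) g).toList).length ≤ m := by
    rw [← len]; omega
  refine ⟨⟨(Word.equiv (M := M) g).toList, hl⟩, ?_⟩
  have hprod : (((Word.equiv (M := M) g).toList).map fun p => of p.snd).prod = g := by
    rw [← Word.prod]; exact prod_equiv g
  have hnu : nu H (QuotientGroup.mk ((((Word.equiv (M := M) g).toList).map
      fun p => of p.snd).prod)) ≤ m := by rw [hprod, hg]; exact hc
  show dite _ _ _ = _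
  refine (dif_pos hnu).trans ?_
  apply Subtype.ext
  simp only
  rw [hprod, hg]

theorem coprodI_separable {ι : Type*} [Finite ι] {M : ι → Type*} [∀ i, Group (M i)]
    [∀ i, Finite (M i)] (q : CoprodI M) (T : Set (CoprodI M)) (hfin : T.Finite)
    (hT : ∀ s ∈ T, s ∉ Subgroup.zpowers q) :
    ∃ (H : Type) (_ : Group H) (_ : Finite H) (φ : CoprodI M →* H),
      ∀ s ∈ T, ∀ k : ℤ, φ s ≠ (φ q) ^ k := by
  letI : DecidableEq ι := Classical.decEq _
  letI : ∀ i, DecidableEq (M i) := fun i => Classical.decEq _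
  -- choose the bound m
  obtain ⟨m0, hm0⟩ : ∃ n, ∀ s ∈ T, len s ≤ n := by
    obtain ⟨n, hn⟩ := (hfin.image len).bddAbove
    exact ⟨n, fun s hs => hn ⟨s, hs, rfl⟩⟩
  set m := max m0 (len q) + 1 with hm
  set H := Subgroup.zpowers q with hH
  -- the representation
  set φ0 := Φ H m with hφ0
  have hlist : ∀ g : CoprodI M, len g < m →
      (φ0 g (x0 H m)).1 = QuotientGroup.mk g := by
    intro g hg
    have hprod : (((Word.equiv (M := M) g).toList).map fun p => of p.snd).prod = g := by
      rw [← Word.prod]; exact prod_equiv g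
    have := eval H m ((Word.equiv (M := M) g).toList) (by rw [← len] at *; omega)
    rw [hprod] at this
    exact this
  have hq : φ0 q (x0 H m) = x0 H m := by
    apply Subtype.ext
    rw [hlist q (by omega)]
    show _ = QuotientGroup.mk 1
    rw [QuotientGroup.eq]
    simpa using H.inv_mem (Subgroup.mem_zpowers q)
  have hqk : ∀ k : ℤ, ((φ0 q) ^ k) (x0 H m) = x0 H m := by
    have hn : ∀ n : ℕ, ((φ0 q) ^ n) (x0 H m) = x0 H m := by
      intro n
      induction n with
      | zero => rfl
      | succ n ih => rw [pow_succ, Equiv.Perm.mul_apply, hq, ih]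
    intro k
    rcases k with n | n
    · rw [Int.ofNat_eq_coe, zpow_natCast]; exact hn n
    · rw [zpow_negSucc]
      apply (Equiv.injective ((φ0 q) ^ (n + 1)))
      rw [← Equiv.Perm.mul_apply, mul_inv_cancel, Equiv.Perm.one_apply, hn (n + 1)]
  have hs : ∀ s ∈ T, φ0 s (x0 H m) ≠ x0 H m := by
    intro s hsT heq
    have h1 : (φ0 s (x0 H m)).1 = QuotientGroup.mk s := by
      refine hlist s ?_
      have := hm0 s hsT; omega
    rw [heq] at h1
    have h2 : (QuotientGroup.mk (1 : CoprodI M) : CoprodI M ⧸ H) = QuotientGroup.mk s := h1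
    rw [QuotientGroup.eq] at h2
    simp only [inv_one, one_mul] at h2
    exact hT s hsT h2
  -- transfer to a Type-0 finite group
  haveI : Finite (X H m) := finiteX H m
  obtain ⟨n, ⟨e⟩⟩ := Finite.exists_equiv_fin (X H m)
  let ψ : Equiv.Perm (X H m) →* Equiv.Perm (Fin n) :=
    { toFun := fun σ => (e.symm.trans σ).trans e
      map_one' := by ext x; simp
      map_mul' := fun σ τ => by ext x; simp }
  have hψinj : Function.Injective ψ := by
    intro σ τ h
    ext c
    have := congrArg (fun ρ => e.symm (ρ (e c))) h
    simpa [ψ] using this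
  refine ⟨Equiv.Perm (Fin n), inferInstance, inferInstance, ψ.comp φ0, ?_⟩
  intro s hsT k heq
  have : φ0 s = (φ0 q) ^ k := by
    apply hψinj
    rw [map_zpow]
    exact heq
  apply hs s hsT
  rw [this, hqk k]

end FPSep

namespace FPSep

open Monoid Monoid.CoprodI

universe u v

variable (A : Type u) (B : Type v) [Group A] [Group B]

def fam : Bool → Type (max u v)
  | true => ULift A
  | false => ULift B

instance : ∀ b, Group (fam A B b) := fun b =>
  match b with
  | true => (inferInstance : Group (ULift A))
  | false => (inferInstance : Group (ULift B))

instance [Finite A] [Finite B] : ∀ b, Finite (fam A B b) := fun b =>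
  match b with
  | true => (inferInstance : Finite (ULift A))
  | false => (inferInstance : Finite (ULift B))

def toI : A ∗ B →* CoprodI (fam A B) :=
  Coprod.lift
    ((CoprodI.of (M := fam A B) (i := true)).comp (MulEquiv.ulift (α := A)).symm.toMonoidHom)
    ((CoprodI.of (M := fam A B) (i := false)).comp (MulEquiv.ulift (α := B)).symm.toMonoidHom)

def fromI : CoprodI (fam A B) →* A ∗ B :=
  CoprodI.lift (fun b =>
    match b with
    | true => Coprod.inl.comp (MulEquiv.ulift (α := A)).toMonoidHom
    | false => Coprod.inr.comp (MulEquiv.ulift (α := B)).toMonoidHom)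

lemma fromI_toI (g : A ∗ B) : fromI A B (toI A B g) = g := by
  have h : (fromI A B).comp (toI A B) = MonoidHom.id (A ∗ B) := by
    apply Coprod.hom_ext <;> ext x <;>
      simp only [toI, fromI, MonoidHom.comp_apply, MonoidHom.id_apply,
        Coprod.lift_apply_inl, Coprod.lift_apply_inr, CoprodI.lift_of] <;> rfl
  exact DFunLike.congr_fun h g

lemma toI_injective : Function.Injective (toI A B) := by
  intro x y h
  have := congrArg (fromI A B) h
  rwa [fromI_toI, fromI_toI] at this

end FPSep

/-- cyclic subgroup separability of free products of finite groups.
Let `G = A ∗ B` with `A, B` finite, `q ∈ G`, and let `S` be a finite subset of `G`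
disjoint from the cyclic subgroup `⟨q⟩`. Then there is a homomorphism `φ` of `G` to a
finite group such that `φ(S)` is disjoint from the cyclic subgroup generated by `φ q`. -/
theorem freeProduct_cyclic_subgroup_separable
    {A B : Type*} [Group A] [Group B] [Finite A] [Finite B]
    (q : A ∗ B) (S : Finset (A ∗ B))
    (hS : ∀ s ∈ S, ∀ k : ℤ, s ≠ q ^ k) :
    ∃ (H : Type) (_ : Group H) (_ : Finite H) (φ : A ∗ B →* H),
      ∀ s ∈ S, ∀ k : ℤ, φ s ≠ (φ q) ^ k := by
  classical
  have hside : ∀ s ∈ FPSep.toI A B '' (S : Set (A ∗ B)),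
      s ∉ Subgroup.zpowers (FPSep.toI A B q) := by
    rintro _ ⟨s, hs, rfl⟩ hmem
    obtain ⟨k, hk⟩ := Subgroup.mem_zpowers_iff.mp hmem
    rw [← map_zpow] at hk
    exact hS s hs k (FPSep.toI_injective A B hk).symm
  obtain ⟨Hty, hg, hf, φ, hφ⟩ := FPSep.coprodI_separable (FPSep.toI A B q)
    (FPSep.toI A B '' (S : Set (A ∗ B))) ((S.finite_toSet).image _) hside
  refine ⟨Hty, hg, hf, φ.comp (FPSep.toI A B), ?_⟩
  intro s hs k heq
  exact hφ (FPSep.toI A B s) ⟨s, hs, rfl⟩ k heq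
end
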